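/- Let n ≥ 2 and W ∈ ℝⁿ. For each K with 1 ≤ K ≤ n−1, let S_top(K) be a set of indices of the K largest entries of W and S_bot(K) a set of indices of the K smallest entries of W. Then the maximum of D(S) over all subsets S ⊆ {1,…,n} with 0 < |S| < n equals max_{1 ≤ K ≤ n−1} max( D(S_top(K)), D(S_bot(K)) ). In particular the globally optimal mask for the binarization objective can be found among the 2(n−1) prefix/suffix masks of a sorted order of W, as exploited by the prefix-sum algorithm. -/
import Mathlib

lemma quad_le_max (u v T b a x : ℝ) (hu : 0 ≤ u) (hv : 0 ≤ v)
    (hbx : b ≤ x) (hxa : x ≤ a) :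
    x^2*u + (T-x)^2*v ≤ max (a^2*u + (T-a)^2*v) (b^2*u + (T-b)^2*v) := by
  rcases le_or_gt (2*v*T) ((u+v)*(x+a)) with h | h
  · exact le_max_of_le_left (by nlinarith)
  · apply le_max_of_le_right
    have h2 : (u+v)*(x+b) ≤ (u+v)*(x+a) :=
      mul_le_mul_of_nonneg_left (by linarith) (by linarith)
    have h3 : 0 ≤ (x-b)*(2*v*T - (u+v)*(x+b)) :=
      mul_nonneg (by linarith) (by linarith)
    nlinarith [h3]

lemma sum_le_sum_of_pairwise {α : Type*} (W : α → ℝ) (X Y : Finset α)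
    (hcard : X.card = Y.card) (h : ∀ x ∈ X, ∀ y ∈ Y, W x ≤ W y) :
    ∑ i ∈ X, W i ≤ ∑ i ∈ Y, W i := by
  rcases X.eq_empty_or_nonempty with rfl | hX
  · have : Y = ∅ := Finset.card_eq_zero.mp hcard.symm
    simp [this]
  · have hY : Y.Nonempty := Finset.card_pos.mp (hcard ▸ Finset.card_pos.mpr hX)
    have h1 : ∑ i ∈ X, W i ≤ X.card • (Y.inf' hY W) :=
      Finset.sum_le_card_nsmul X W _ (fun x hx => Finset.le_inf' hY _ (fun y hy => h x hx y hy))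
    have h2 : Y.card • (Y.inf' hY W) ≤ ∑ i ∈ Y, W i :=
      Finset.card_nsmul_le_sum Y W _ (fun y hy => Finset.inf'_le W hy)
    calc ∑ i ∈ X, W i ≤ X.card • (Y.inf' hY W) := h1
      _ = Y.card • (Y.inf' hY W) := by rw [hcard]
      _ ≤ ∑ i ∈ Y, W i := h2

/-- The maximum of the objective `D` over all proper masks
(`0 < |S| < n`) equals `max_{1 ≤ K ≤ n−1} max(D(S_top(K)), D(S_bot(K)))`, where
`S_top(K)`/`S_bot(K)` select the `K` largest/smallest entries of `W`: stated as
the latter quantity being the greatest value of `D` over proper masks. -/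
theorem dabnet_global_max_prefix_suffix (n : ℕ) (hn : 2 ≤ n) (W : Fin n → ℝ)
    (Stop Sbot : ℕ → Finset (Fin n))
    (htopcard : ∀ K, 1 ≤ K → K ≤ n - 1 → (Stop K).card = K)
    (hbotcard : ∀ K, 1 ≤ K → K ≤ n - 1 → (Sbot K).card = K)
    (htop : ∀ K, 1 ≤ K → K ≤ n - 1 → ∀ i ∈ Stop K, ∀ j ∉ Stop K, W j ≤ W i)
    (hbot : ∀ K, 1 ≤ K → K ≤ n - 1 → ∀ i ∈ Sbot K, ∀ j ∉ Sbot K, W i ≤ W j)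
    (D : Finset (Fin n) → ℝ)
    (hD : ∀ S : Finset (Fin n),
      D S = (∑ i ∈ S, W i) ^ 2 / (S.card : ℝ)
            + (∑ i ∈ Sᶜ, W i) ^ 2 / ((n : ℝ) - (S.card : ℝ))) :
    IsGreatest {x : ℝ | ∃ S : Finset (Fin n), 0 < S.card ∧ S.card < n ∧ D S = x}
      ((Finset.Icc 1 (n - 1)).sup'
        (Finset.nonempty_Icc.mpr (by omega))
        (fun K => max (D (Stop K)) (D (Sbot K)))) := by
  set T : ℝ := ∑ i, W i with hT
  have hcompl : ∀ S : Finset (Fin n), ∑ i ∈ Sᶜ, W i = T - ∑ i ∈ S, W i := by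
    intro S
    have := Finset.sum_add_sum_compl S W
    rw [hT]; linarith
  constructor
  · obtain ⟨K, hK, hEq⟩ := Finset.exists_mem_eq_sup'
      (Finset.nonempty_Icc.mpr (by omega : (1:ℕ) ≤ n - 1))
      (fun K => max (D (Stop K)) (D (Sbot K)))
    rw [Finset.mem_Icc] at hK
    rw [hEq]
    rcases max_cases (D (Stop K)) (D (Sbot K)) with ⟨h, _⟩ | ⟨h, _⟩
    · exact ⟨Stop K, by rw [htopcard K hK.1 hK.2]; omega,
        by rw [htopcard K hK.1 hK.2]; omega, h.symm⟩
    · exact ⟨Sbot K, by rw [hbotcard K hK.1 hK.2]; omega,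
        by rw [hbotcard K hK.1 hK.2]; omega, h.symm⟩
  · rintro x ⟨S, h1, h2, rfl⟩
    set K := S.card with hK
    have hK1 : 1 ≤ K := h1
    have hK2 : K ≤ n - 1 := by omega
    have hmem : K ∈ Finset.Icc 1 (n - 1) := Finset.mem_Icc.mpr ⟨hK1, hK2⟩
    have key : D S ≤ max (D (Stop K)) (D (Sbot K)) := by
      have hcT : (Stop K).card = K := htopcard K hK1 hK2
      have hcB : (Sbot K).card = K := hbotcard K hK1 hK2
      set s := ∑ i ∈ S, W i
      set a := ∑ i ∈ Stop K, W i
      set b := ∑ i ∈ Sbot K, W i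
      have hsa : s ≤ a := by
        have hc : (S \ Stop K).card = (Stop K \ S).card := by
          have := Finset.card_sdiff_add_card_inter S (Stop K)
          have := Finset.card_sdiff_add_card_inter (Stop K) S
          rw [Finset.inter_comm] at this
          omega
        have hle := sum_le_sum_of_pairwise W (S \ Stop K) (Stop K \ S) hc
          (fun x hx y hy => htop K hK1 hK2 y (Finset.mem_sdiff.mp hy).1 x
            (Finset.mem_sdiff.mp hx).2)
        have e1 := Finset.sum_inter_add_sum_sdiff S (Stop K) W
        have e2 := Finset.sum_inter_add_sum_sdiff (Stop K) S W
        rw [Finset.inter_comm] at e2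
        simp only [s, a] at *
        linarith
      have hbs : b ≤ s := by
        have hc : (Sbot K \ S).card = (S \ Sbot K).card := by
          have := Finset.card_sdiff_add_card_inter S (Sbot K)
          have := Finset.card_sdiff_add_card_inter (Sbot K) S
          rw [Finset.inter_comm] at this
          omega
        have hle := sum_le_sum_of_pairwise W (Sbot K \ S) (S \ Sbot K) hc
          (fun x hx y hy => hbot K hK1 hK2 x (Finset.mem_sdiff.mp hx).1 y
            (Finset.mem_sdiff.mp hy).2)
        have e1 := Finset.sum_inter_add_sum_sdiff S (Sbot K) W
        have e2 := Finset.sum_inter_add_sum_sdiff (Sbot K) S W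
        rw [Finset.inter_comm] at e2
        simp only [s, b] at *
        linarith
      have hu : (0:ℝ) ≤ ((K:ℝ))⁻¹ := by positivity
      have hv : (0:ℝ) ≤ ((n:ℝ) - (K:ℝ))⁻¹ := by
        apply inv_nonneg.mpr
        have : (K:ℝ) ≤ (n:ℝ) := by exact_mod_cast le_of_lt h2
        linarith
      have := quad_le_max ((K:ℝ))⁻¹ ((n:ℝ) - (K:ℝ))⁻¹ T b a s hu hv hbs hsa
      rw [hD S, hD (Stop K), hD (Sbot K), hcompl S, hcompl (Stop K), hcompl (Sbot K),
        hcT, hcB]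
      simp only [div_eq_mul_inv]
      exact this
    exact le_trans key (Finset.le_sup' (fun K => max (D (Stop K)) (D (Sbot K))) hmem)
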